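/- Let g ∈ F_q[t] be monic, squarefree, and of degree ≥ 1. Then ∑_{d | g, d monic} q^{−deg d} ≤ (1 + log(deg g)/log q) · e. -/

import Mathlib

/-!
Common setup: `F_q((1/t))` is realized as `LaurentSeries Fq` (formal Laurent series in `X`)
under the identification `X = 1/t`; thus the coefficient of `t^i` is the coefficient of
`X^(-i)`, and `𝕋` consists of series supported on positive powers of `X`.
-/

open Polynomial
open scoped Classical

/-- The element `t` of `F_q((1/t))`, i.e. the Laurent series `X⁻¹`. -/
noncomputable def tElem (Fq : Type) [Field Fq] : LaurentSeries Fq :=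
  HahnSeries.single (-1 : ℤ) 1

/-- The natural embedding of `F_q[t]` into `F_q((1/t))`: evaluate the polynomial at `t`. -/
noncomputable def toL {Fq : Type} [Field Fq] (f : Polynomial Fq) : LaurentSeries Fq :=
  Polynomial.aeval (tElem Fq) f

/-- The norm on `F_q((1/t))`: `|x| = q^j` where `j` is the largest index with `x_j ≠ 0`
(in `t`-coefficients, so `j = -(order of the Hahn series)`), and `|0| = 0`. -/
noncomputable def nrm {Fq : Type} [Field Fq] [Fintype Fq] (x : LaurentSeries Fq) : ℝ :=
  if x = 0 then 0 else (Fintype.card Fq : ℝ) ^ (-(HahnSeries.order x))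

/-- `𝕋 = {∑_{i<0} x_i t^i}`: Laurent series supported on negative powers of `t`. -/
def TT (Fq : Type) [Field Fq] : Set (LaurentSeries Fq) :=
  {x | ∀ n : ℤ, n ≤ 0 → x.coeff n = 0}

/-- The exponential `e_q(x) = ψ(x_{-1})`, where `ψ(y) = e^{2πi·tr(y)/p}` with
`tr : F_q → F_p` the field trace, and `x_{-1}` is the coefficient of `t^{-1}` in `x`
(the coefficient of `X^1` of the Hahn series). -/
noncomputable def eQ {Fq : Type} [Field Fq] [Fintype Fq] (p : ℕ) [CharP Fq p]
    (x : LaurentSeries Fq) : ℂ :=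
  letI := ZMod.algebra Fq p
  Complex.exp (2 * Real.pi * Complex.I *
    (((Algebra.trace (ZMod p) Fq (x.coeff 1)).val : ℂ) / (p : ℂ)))

/-- The Möbius function on `F_q[t]`: `μ(f) = (-1)^r` if `f` is a product of `r` distinct
irreducibles, and `μ(f) = 0` otherwise. -/
noncomputable def mu {Fq : Type} [Field Fq] (f : Polynomial Fq) : ℤ :=
  if Squarefree f then
    (-1) ^ Multiset.card (UniqueFactorizationMonoid.normalizedFactors f)
  else 0

/-- The monic polynomial `X^n + ∑_{i<n} c_i X^i`; monic polynomials of degree `n`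
are exactly the `stdPoly n c` for a unique `c : Fin n → Fq`. -/
noncomputable def stdPoly {Fq : Type} [Field Fq] (n : ℕ) (c : Fin n → Fq) : Polynomial Fq :=
  X ^ n + ∑ i : Fin n, C (c i) * X ^ (i : ℕ)

/-- The polynomial `∑_{i<k} c_i X^i` of degree `< k`. -/
noncomputable def ltPoly {Fq : Type} [Field Fq] (k : ℕ) (c : Fin k → Fq) : Polynomial Fq :=
  ∑ i : Fin k, C (c i) * X ^ (i : ℕ)

/-- Hayes' relation `R_{s,g}` on monic polynomials:
`a ≡ b mod R_{s,g}` iff `g ∣ a - b` and `|a/t^{deg a} - b/t^{deg b}| < q^{-s}`.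
(Here `1/t^{deg a}` is the Laurent series `X^{deg a}`.) -/
def Requiv {Fq : Type} [Field Fq] [Fintype Fq] (s : ℕ) (g a b : Polynomial Fq) : Prop :=
  g ∣ (a - b) ∧
  nrm (toL a * HahnSeries.single (a.natDegree : ℤ) 1 -
        toL b * HahnSeries.single (b.natDegree : ℤ) 1)
    < (Fintype.card Fq : ℝ) ^ (-(s : ℤ))

/-- `φ(g)`: the number of invertible residue classes modulo `g`. -/
noncomputable def phi {Fq : Type} [Field Fq] (g : Polynomial Fq) : ℕ :=
  Nat.card ((Polynomial Fq ⧸ Ideal.span {g})ˣ)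

/-- `χ` is (the extension by zero of) a character of the unit group `R*_{s,g}` of the quotient
monoid of monic polynomials modulo `R_{s,g}`: it vanishes off monic polynomials, it is
multiplicative on monic polynomials, it is constant on `R_{s,g}`-classes, and it vanishes at a
monic polynomial exactly when that polynomial is not coprime to `g`.  (Such functions correspond
bijectively to the characters of the finite abelian group `R*_{s,g}`.) -/
def IsRChar {Fq : Type} [Field Fq] [Fintype Fq] (s : ℕ) (g : Polynomial Fq)
    (χ : Polynomial Fq → ℂ) : Prop :=
  (∀ f : Polynomial Fq, ¬ f.Monic → χ f = 0) ∧
  (∀ a b : Polynomial Fq, a.Monic → b.Monic → χ (a * b) = χ a * χ b) ∧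
  (∀ a b : Polynomial Fq, a.Monic → b.Monic → Requiv s g a b → χ a = χ b) ∧
  (∀ f : Polynomial Fq, f.Monic → (χ f = 0 ↔ ¬ IsCoprime f g))

lemma monic_irred_dvd (Fq : Type) [Field Fq] [Fintype Fq] (P : Polynomial Fq)
    (hPm : P.Monic) (hPi : Irreducible P) :
    P ∣ X ^ (Fintype.card Fq ^ P.natDegree) - X := by
  haveI : Fact (Irreducible P) := ⟨hPi⟩
  have h0 : P ≠ 0 := hPm.ne_zero
  haveI : Module.Finite Fq (AdjoinRoot P) := (AdjoinRoot.powerBasis h0).finite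
  haveI : Finite (AdjoinRoot P) := Module.finite_of_finite Fq
  haveI : Fintype (AdjoinRoot P) := Fintype.ofFinite _
  have hcard : Fintype.card (AdjoinRoot P) = Fintype.card Fq ^ P.natDegree := by
    rw [Module.card_eq_pow_finrank (K := Fq), (AdjoinRoot.powerBasis h0).finrank,
      AdjoinRoot.powerBasis_dim]
  have hroot : (Polynomial.aeval (AdjoinRoot.root P))
      ((X : Polynomial Fq) ^ (Fintype.card Fq ^ P.natDegree) - X) = 0 := by
    rw [map_sub, map_pow, aeval_X, ← hcard, FiniteField.pow_card, sub_self]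
  have h := minpoly.dvd Fq (AdjoinRoot.root P) hroot
  rwa [AdjoinRoot.minpoly_root h0, hPm.leadingCoeff, inv_one, map_one, mul_one] at h

lemma card_mul_le (Fq : Type) [Field Fq] [Fintype Fq] (E : Finset (Polynomial Fq)) (m : ℕ)
    (hm : m ≠ 0) (hE : ∀ P ∈ E, P.Monic ∧ Irreducible P ∧ P.natDegree = m) :
    E.card * m ≤ Fintype.card Fq ^ m := by
  have hq : 1 < Fintype.card Fq ^ m := Nat.one_lt_pow hm Fintype.one_lt_card
  have hne : ((X : Polynomial Fq) ^ (Fintype.card Fq ^ m) - X) ≠ 0 :=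
    FiniteField.X_pow_card_sub_X_ne_zero _ hq
  have hdvd : (∏ P ∈ E, P) ∣ (X : Polynomial Fq) ^ (Fintype.card Fq ^ m) - X := by
    apply Finset.prod_dvd_of_coprime
    · intro a ha b hb hab
      obtain ⟨ham, hai, -⟩ := hE a ha
      obtain ⟨hbm, hbi, -⟩ := hE b hb
      simp only [Function.onFun, id]
      rw [hai.coprime_iff_not_dvd]
      intro hd
      exact hab (Polynomial.eq_of_monic_of_associated ham hbm (hai.associated_of_dvd hbi hd))
    · intro P hP
      obtain ⟨hPm, hPi, hPd⟩ := hE P hP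
      simpa [hPd] using monic_irred_dvd Fq P hPm hPi
  have h1 := Polynomial.natDegree_le_of_dvd hdvd hne
  rw [Polynomial.natDegree_prod_of_monic _ _ (fun P hP => (hE P hP).1),
    FiniteField.X_pow_card_sub_X_natDegree_eq _ hq] at h1
  calc E.card * m = ∑ P ∈ E, P.natDegree := by
        rw [Finset.sum_congr rfl (fun P hP => (hE P hP).2.2), Finset.sum_const, smul_eq_mul]
      _ ≤ _ := h1

lemma one_div_le_log_succ (M : ℕ) (hM : 1 ≤ M) :
    (1:ℝ)/(M+1) ≤ Real.log (M+1) - Real.log M := by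
  have hM0 : (0:ℝ) < M := by exact_mod_cast hM
  have h := Real.log_le_sub_one_of_pos (x := (M:ℝ)/(M+1)) (by positivity)
  rw [Real.log_div hM0.ne' (by positivity)] at h
  have h2 : (M:ℝ)/(M+1) - 1 = -(1/(M+1)) := by field_simp; ring
  rw [h2] at h
  linarith

lemma harmonic_le (M : ℕ) (hM : 1 ≤ M) :
    ∑ m ∈ Finset.Icc 1 M, (1/(m:ℝ)) ≤ 1 + Real.log M := by
  induction M with
  | zero => exact absurd hM (by omega)
  | succ M ih =>
    rcases Nat.lt_or_ge M 1 with h | h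
    · interval_cases M
      simp
    · rw [Finset.sum_Icc_succ_top (by omega : 1 ≤ M+1)]
      have h2 := one_div_le_log_succ M h
      have h3 := ih h
      push_cast at h2 h3 ⊢
      linarith

/-- (Lemma 4.) For `g` monic, squarefree, of degree `≥ 1`,
`∑_{d ∣ g, d monic} q^{-deg d} ≤ (1 + log(deg g)/log q)·e`. -/
theorem sum_divisors_bound
    (Fq : Type) [Field Fq] [Fintype Fq] (g : Polynomial Fq)
    (hg : g.Monic) (hsf : Squarefree g) (hdeg : 1 ≤ g.natDegree) :
    (∑ᶠ d ∈ {d : Polynomial Fq | d.Monic ∧ d ∣ g},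
        (Fintype.card Fq : ℝ) ^ (-(d.natDegree : ℤ)))
      ≤ (1 + Real.log (g.natDegree) / Real.log (Fintype.card Fq)) * Real.exp 1 := by
  classical
  set q : ℕ := Fintype.card Fq with hq
  have hq1 : 1 < q := Fintype.one_lt_card
  set n : ℕ := g.natDegree with hn
  have hg0 : g ≠ 0 := hg.ne_zero
  have hQ1 : (1:ℝ) < (q:ℝ) := by exact_mod_cast hq1
  have hQ0 : (0:ℝ) < (q:ℝ) := by linarith
  set w : Polynomial Fq → ℝ := fun P => ((q:ℝ)⁻¹) ^ P.natDegree with hw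
  have hw_eq : ∀ P : Polynomial Fq, (q:ℝ) ^ (-(P.natDegree:ℤ)) = w P := by
    intro P
    simp only [hw, zpow_neg, zpow_natCast, inv_pow]
  have hwpos : ∀ P, 0 < w P := fun P => pow_pos (inv_pos.mpr hQ0) _
  -- facts about normalized factors of nonzero polynomials
  have hfac : ∀ d : Polynomial Fq, ∀ P ∈ UniqueFactorizationMonoid.normalizedFactors d, P.Monic ∧ Irreducible P := by
    intro d P hP
    have hirr := UniqueFactorizationMonoid.irreducible_of_normalized_factor P hP
    have hnorm := UniqueFactorizationMonoid.normalize_normalized_factor P hP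
    exact ⟨hnorm ▸ Polynomial.monic_normalize hirr.ne_zero, hirr⟩
  have hprodfac : ∀ d : Polynomial Fq, d ≠ 0 → d.Monic → (UniqueFactorizationMonoid.normalizedFactors d).prod = d := by
    intro d hd0 hdm
    have hmon : ((UniqueFactorizationMonoid.normalizedFactors d).map id).prod.Monic :=
      Polynomial.monic_multiset_prod_of_monic _ id (fun P hP => (hfac d P hP).1)
    rw [Multiset.map_id] at hmon
    exact Polynomial.eq_of_monic_of_associated hmon hdm
      (UniqueFactorizationMonoid.prod_normalizedFactors hd0)
  set F : Finset (Polynomial Fq) := (UniqueFactorizationMonoid.normalizedFactors g).toFinset with hF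
  have hFval : F.val = UniqueFactorizationMonoid.normalizedFactors g := by
    rw [hF, Multiset.toFinset_val, Multiset.dedup_eq_self.mpr
      ((UniqueFactorizationMonoid.squarefree_iff_nodup_normalizedFactors hg0).mp hsf)]
  have hFmem : ∀ P ∈ F, P.Monic ∧ Irreducible P := by
    intro P hP
    exact hfac g P (by rwa [hF, Multiset.mem_toFinset] at hP)
  have hFdegpos : ∀ P ∈ F, 1 ≤ P.natDegree := fun P hP => (hFmem P hP).2.natDegree_pos
  have hg_prod : ∏ P ∈ F, P = g := by
    rw [Finset.prod_eq_multiset_prod, Multiset.map_id', hFval]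
    exact hprodfac g hg0 hg
  have hsumdeg : ∑ P ∈ F, P.natDegree = n := by
    rw [hn, ← hg_prod, Polynomial.natDegree_prod_of_monic _ _ (fun P hP => (hFmem P hP).1)]
  -- divisors decompose as products of subsets of F
  have hdiv : ∀ d : Polynomial Fq, d.Monic → d ∣ g →
      (UniqueFactorizationMonoid.normalizedFactors d).toFinset ⊆ F ∧ ∏ P ∈ (UniqueFactorizationMonoid.normalizedFactors d).toFinset, P = d := by
    intro d hdm hdvd
    have hd0 : d ≠ 0 := hdm.ne_zero
    have hnodup := (UniqueFactorizationMonoid.squarefree_iff_nodup_normalizedFactors hd0).mp (hsf.squarefree_of_dvd hdvd)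
    have hval : (UniqueFactorizationMonoid.normalizedFactors d).toFinset.val = UniqueFactorizationMonoid.normalizedFactors d := by
      rw [Multiset.toFinset_val, Multiset.dedup_eq_self.mpr hnodup]
    constructor
    · intro P hP
      rw [Multiset.mem_toFinset] at hP
      rw [hF, Multiset.mem_toFinset]
      exact Multiset.mem_of_le
        ((UniqueFactorizationMonoid.dvd_iff_normalizedFactors_le_normalizedFactors hd0 hg0).mp hdvd) hP
    · rw [Finset.prod_eq_multiset_prod, Multiset.map_id', hval]
      exact hprodfac d hd0 hdm
  -- finiteness of the divisor set
  have hSsub : {d : Polynomial Fq | d.Monic ∧ d ∣ g} ⊆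
      ↑(F.powerset.image fun T => ∏ P ∈ T, P) := by
    intro d hd
    obtain ⟨hdm, hdvd⟩ := hd
    obtain ⟨hsub, hprod⟩ := hdiv d hdm hdvd
    simp only [Finset.coe_image, Set.mem_image, Finset.mem_coe, Finset.mem_powerset]
    exact ⟨(UniqueFactorizationMonoid.normalizedFactors d).toFinset, hsub, hprod⟩
  have hfin : Set.Finite {d : Polynomial Fq | d.Monic ∧ d ∣ g} :=
    Set.Finite.subset (Finset.finite_toSet _) hSsub
  rw [← hfin.coe_toFinset, finsum_mem_coe_finset]
  set D := hfin.toFinset with hD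
  have hDmem : ∀ d, d ∈ D → (d.Monic ∧ d ∣ g) := by
    intro d hd
    rwa [hD, Set.Finite.mem_toFinset] at hd
  -- step B/C/D: bound by exp of prime sum
  have hstep : ∑ d ∈ D, (q:ℝ) ^ (-(d.natDegree:ℤ)) ≤ Real.exp (∑ P ∈ F, w P) := by
    have h1 : ∑ d ∈ D, (q:ℝ) ^ (-(d.natDegree:ℤ)) =
        ∑ d ∈ D, ∏ P ∈ (UniqueFactorizationMonoid.normalizedFactors d).toFinset, w P := by
      refine Finset.sum_congr rfl (fun d hd => ?_)
      obtain ⟨hdm, hdvd⟩ := hDmem d hd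
      obtain ⟨hsub, hprod⟩ := hdiv d hdm hdvd
      have hdeg_eq : d.natDegree = ∑ P ∈ (UniqueFactorizationMonoid.normalizedFactors d).toFinset, P.natDegree := by
        conv_lhs => rw [← hprod]
        rw [Polynomial.natDegree_prod_of_monic _ _ (fun P hP => (hFmem P (hsub hP)).1)]
      rw [hw_eq d]
      show ((q:ℝ)⁻¹) ^ d.natDegree = _
      rw [hdeg_eq, ← Finset.prod_pow_eq_pow_sum]
    rw [h1]
    have h2 : ∑ d ∈ D, ∏ P ∈ (UniqueFactorizationMonoid.normalizedFactors d).toFinset, w P =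
        ∑ T ∈ D.image (fun d => (UniqueFactorizationMonoid.normalizedFactors d).toFinset), ∏ P ∈ T, w P := by
      rw [Finset.sum_image]
      intro d1 h1' d2 h2' heq
      obtain ⟨hm1, hd1⟩ := hDmem d1 h1'
      obtain ⟨hm2, hd2⟩ := hDmem d2 h2'
      beta_reduce at heq
      rw [← (hdiv d1 hm1 hd1).2, ← (hdiv d2 hm2 hd2).2, heq]
    rw [h2]
    have h3 : D.image (fun d => (UniqueFactorizationMonoid.normalizedFactors d).toFinset) ⊆ F.powerset := by
      intro T hT
      obtain ⟨d, hd, rfl⟩ := Finset.mem_image.mp hT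
      obtain ⟨hdm, hdvd⟩ := hDmem d hd
      exact Finset.mem_powerset.mpr (hdiv d hdm hdvd).1
    calc ∑ T ∈ D.image (fun d => (UniqueFactorizationMonoid.normalizedFactors d).toFinset), ∏ P ∈ T, w P
        ≤ ∑ T ∈ F.powerset, ∏ P ∈ T, w P :=
          Finset.sum_le_sum_of_subset_of_nonneg h3
            (fun T _ _ => Finset.prod_nonneg fun P _ => (hwpos P).le)
      _ = ∏ P ∈ F, (w P + 1) := by
          rw [Finset.prod_add]
          exact Finset.sum_congr rfl (fun T _ => by simp)
      _ ≤ ∏ P ∈ F, Real.exp (w P) :=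
          Finset.prod_le_prod (fun P _ => by positivity)
            (fun P _ => by
              have := Real.add_one_le_exp (w P)
              linarith)
      _ = Real.exp (∑ P ∈ F, w P) := (Real.exp_sum F w).symm
  -- step E: bound the prime sum
  set M : ℕ := Nat.log q n with hM
  have hn0 : n ≠ 0 := by omega
  have hnq : n < q ^ (M+1) := Nat.lt_pow_succ_log_self hq1 n
  have hqn : q ^ M ≤ n := Nat.pow_log_le_self q hn0
  have hhead : ∑ P ∈ F.filter (fun P => P.natDegree ≤ M), w P ≤
      ∑ m ∈ Finset.Icc 1 M, (1/(m:ℝ)) := by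
    have hmaps : ∀ P ∈ F.filter (fun P => P.natDegree ≤ M), P.natDegree ∈ Finset.Icc 1 M := by
      intro P hP
      rw [Finset.mem_filter] at hP
      exact Finset.mem_Icc.mpr ⟨hFdegpos P hP.1, hP.2⟩
    rw [← Finset.sum_fiberwise_of_maps_to hmaps w]
    refine Finset.sum_le_sum (fun m hm => ?_)
    have hm1 : 1 ≤ m := (Finset.mem_Icc.mp hm).1
    set E := (F.filter (fun P => P.natDegree ≤ M)).filter (fun P => P.natDegree = m) with hE
    have hEsub : ∀ P ∈ E, P.Monic ∧ Irreducible P ∧ P.natDegree = m := by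
      intro P hP
      rw [hE, Finset.mem_filter, Finset.mem_filter] at hP
      exact ⟨(hFmem P hP.1.1).1, (hFmem P hP.1.1).2, hP.2⟩
    have hcard : E.card * m ≤ q ^ m := card_mul_le Fq E m (by omega) hEsub
    have h5 : ∑ P ∈ E, w P = (E.card : ℝ) * ((q:ℝ)⁻¹) ^ m := by
      rw [Finset.sum_congr rfl (fun P hP => show w P = ((q:ℝ)⁻¹) ^ m by
          simp only [hw]; rw [(hEsub P hP).2.2]),
        Finset.sum_const, nsmul_eq_mul]
    rw [h5]
    rw [inv_pow, mul_comm, inv_mul_eq_div, div_le_div_iff₀ (by positivity) (by positivity)]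
    calc (E.card : ℝ) * m = ((E.card * m : ℕ) : ℝ) := by push_cast; ring
      _ ≤ ((q ^ m : ℕ) : ℝ) := by exact_mod_cast hcard
      _ = 1 * (q:ℝ) ^ m := by push_cast; ring
  have htail : ∑ P ∈ F.filter (fun P => ¬ P.natDegree ≤ M), w P ≤ 1/(M+1) := by
    have hc0 : (0:ℝ) < ((q:ℝ)) ^ (M+1) := by positivity
    have h1 : ∀ P ∈ F.filter (fun P => ¬ P.natDegree ≤ M),
        w P ≤ (P.natDegree : ℝ) * (((q:ℝ)⁻¹) ^ (M+1) / (M+1)) := by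
      intro P hP
      rw [Finset.mem_filter] at hP
      have hd : M + 1 ≤ P.natDegree := by omega
      have e1 : w P ≤ ((q:ℝ)⁻¹) ^ (M+1) := by
        rw [hw]
        exact pow_le_pow_of_le_one (by positivity) (inv_le_one_of_one_le₀ hQ1.le) hd
      have e2 : (1:ℝ) ≤ (P.natDegree : ℝ) / (M+1) := by
        rw [le_div_iff₀ (by positivity)]
        have : ((M:ℝ)+1) ≤ (P.natDegree : ℝ) := by exact_mod_cast hd
        linarith
      calc w P ≤ ((q:ℝ)⁻¹) ^ (M+1) := e1
        _ = 1 * ((q:ℝ)⁻¹) ^ (M+1) := by ring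
        _ ≤ ((P.natDegree : ℝ) / (M+1)) * ((q:ℝ)⁻¹) ^ (M+1) := by
            apply mul_le_mul_of_nonneg_right e2 (by positivity)
        _ = (P.natDegree : ℝ) * (((q:ℝ)⁻¹) ^ (M+1) / (M+1)) := by ring
    calc ∑ P ∈ F.filter (fun P => ¬ P.natDegree ≤ M), w P
        ≤ ∑ P ∈ F.filter (fun P => ¬ P.natDegree ≤ M),
            (P.natDegree : ℝ) * (((q:ℝ)⁻¹) ^ (M+1) / (M+1)) := Finset.sum_le_sum h1
      _ = (∑ P ∈ F.filter (fun P => ¬ P.natDegree ≤ M), (P.natDegree : ℝ)) *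
            (((q:ℝ)⁻¹) ^ (M+1) / (M+1)) := by rw [← Finset.sum_mul]
      _ ≤ (n : ℝ) * (((q:ℝ)⁻¹) ^ (M+1) / (M+1)) := by
          apply mul_le_mul_of_nonneg_right _ (by positivity)
          have : ∑ P ∈ F.filter (fun P => ¬ P.natDegree ≤ M), (P.natDegree : ℝ) ≤
              ∑ P ∈ F, (P.natDegree : ℝ) :=
            Finset.sum_le_sum_of_subset_of_nonneg (Finset.filter_subset _ _)
              (fun P _ _ => by positivity)
          calc _ ≤ ∑ P ∈ F, (P.natDegree : ℝ) := this
            _ = (n : ℝ) := by rw [← hsumdeg]; push_cast; ring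
      _ ≤ 1/(M+1) := by
          have hle : (n:ℝ) ≤ (q:ℝ) ^ (M+1) := by
            have : (n:ℝ) < ((q ^ (M+1) : ℕ) : ℝ) := by exact_mod_cast hnq
            push_cast at this
            linarith
          have h9 : (n:ℝ) * (((q:ℝ)^(M+1))⁻¹) ≤ 1 := by
            rw [← div_eq_mul_inv, div_le_one hc0]
            exact hle
          calc (n:ℝ) * (((q:ℝ)⁻¹) ^ (M+1) / (M+1))
              = ((n:ℝ) * (((q:ℝ)^(M+1))⁻¹)) * (1/((M:ℝ)+1)) := by rw [inv_pow]; ring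
            _ ≤ 1 * (1/((M:ℝ)+1)) :=
                mul_le_mul_of_nonneg_right h9 (by positivity)
            _ = 1/((M:ℝ)+1) := one_mul _
  -- step F: analytic bound
  set L : ℝ := Real.log n / Real.log q with hL
  have hlogq : 0 < Real.log (q:ℝ) := Real.log_pos hQ1
  have hL0 : 0 ≤ L := by
    rw [hL]
    apply div_nonneg _ hlogq.le
    apply Real.log_natCast_nonneg
  have hbound : (∑ m ∈ Finset.Icc 1 M, (1/(m:ℝ))) + 1/(M+1) ≤ 1 + Real.log (1 + L) := by
    have hlog1L : 0 ≤ Real.log (1 + L) := Real.log_nonneg (by linarith)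
    rcases Nat.eq_zero_or_pos M with h0 | hMpos
    · rw [h0]
      simp
      linarith
    · have hH := harmonic_le M hMpos
      have hk := one_div_le_log_succ M hMpos
      have hML : (M:ℝ) + 1 ≤ 1 + L := by
        have h6 : ((q ^ M : ℕ) : ℝ) ≤ (n : ℝ) := by exact_mod_cast hqn
        push_cast at h6
        have h7 := Real.log_le_log (by positivity) h6
        rw [Real.log_pow] at h7
        have : (M:ℝ) ≤ L := by
          rw [hL, le_div_iff₀ hlogq]
          linarith
        linarith
      have h8 : Real.log ((M:ℝ)+1) ≤ Real.log (1 + L) :=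
        Real.log_le_log (by positivity) hML
      push_cast at hk
      linarith
  -- final assembly
  have hsplit : ∑ P ∈ F, w P = (∑ P ∈ F.filter (fun P => P.natDegree ≤ M), w P)
      + ∑ P ∈ F.filter (fun P => ¬ P.natDegree ≤ M), w P :=
    (Finset.sum_filter_add_sum_filter_not F _ w).symm
  have hEsum : ∑ P ∈ F, w P ≤ 1 + Real.log (1 + L) := by
    rw [hsplit]
    calc _ ≤ (∑ m ∈ Finset.Icc 1 M, (1/(m:ℝ))) + 1/(M+1) := add_le_add hhead htail
      _ ≤ 1 + Real.log (1 + L) := hbound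
  calc ∑ d ∈ D, (q:ℝ) ^ (-(d.natDegree:ℤ)) ≤ Real.exp (∑ P ∈ F, w P) := hstep
    _ ≤ Real.exp (1 + Real.log (1 + L)) := Real.exp_le_exp.mpr hEsum
    _ = (1 + L) * Real.exp 1 := by
        rw [Real.exp_add, Real.exp_log (by linarith)]
        ring
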